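/- The area of the region R₂(1) = {(a, b) ∈ ℝ² : |a| < 1 and |b³ + ab| < 1} equals 2·log(α₋/α₊) + (4/3)(α₊ + α₋), where α₊ and α₋ are the real roots of x³ + x − 1 and x³ − x − 1 respectively. -/

import Mathlib

open MeasureTheory Set

private lemma ofReal_max0 (t : ℝ) : ENNReal.ofReal (max 0 t) = ENNReal.ofReal t := by
  rcases le_total t 0 with h | h
  · rw [max_eq_left h, ENNReal.ofReal_of_nonpos h, ENNReal.ofReal_zero]
  · rw [max_eq_right h]

set_option maxHeartbeats 1000000 in
open MeasureTheory in
theorem area_R2_one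
    (ap am : ℝ) (hap : ap ^ 3 + ap - 1 = 0) (ham : am ^ 3 - am - 1 = 0) :
    volume {p : ℝ × ℝ | |p.1| < 1 ∧ |p.2 ^ 3 + p.1 * p.2| < 1} =
      ENNReal.ofReal (2 * Real.log (am / ap) + (4 / 3) * (ap + am)) := by
  -- numeric bounds
  have hap1 : 0.58 < ap ∧ ap < 1 := by
    constructor <;> nlinarith [sq_nonneg ap, sq_nonneg (ap - 0.58), sq_nonneg (ap + 1), sq_nonneg (ap - 1)]
  have ham1 : 1.3 < am ∧ am < 1.4 := by
    constructor <;> nlinarith [sq_nonneg am, sq_nonneg (am - 1.3), sq_nonneg (am + 1),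
      sq_nonneg (am - 1.4), sq_nonneg (am + 1.3), sq_nonneg (am + 1.4)]
  have hap0 : 0 < ap := by linarith [hap1.1]
  have hapam : ap ≤ am := by linarith [hap1.2, ham1.1]
  have ham0 : 0 < am := by linarith [ham1.1]
  -- the slice-length function
  set h : ℝ → ℝ := fun t => max 0 (1 + min 1 ((1 - t ^ 3) / t)) with hh
  have h_nonneg : ∀ t, 0 ≤ h t := fun t => le_max_left _ _
  have h_le2 : ∀ t, h t ≤ 2 := by
    intro t
    have := min_le_left 1 ((1 - t ^ 3) / t)
    exact max_le (by norm_num) (by linarith)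
  have h_zero : ∀ t, am < t → h t = 0 := by
    intro t ht
    have ht0 : 0 < t := lt_trans ham0 ht
    have hcube : t ^ 3 - t - 1 ≥ 0 := by
      nlinarith [mul_nonneg (le_of_lt (sub_pos.2 ht))
        (by nlinarith : (0:ℝ) ≤ t ^ 2 + t * am + am ^ 2 - 1)]
    have hdiv : (1 - t ^ 3) / t ≤ -1 := by
      rw [div_le_iff₀ ht0]; nlinarith
    have := min_le_right 1 ((1 - t ^ 3) / t)
    exact max_eq_left (by linarith)
  have h_two : ∀ t ∈ Ioc (0:ℝ) ap, h t = 2 := by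
    rintro t ⟨ht0, hta⟩
    have : (1:ℝ) ≤ (1 - t ^ 3) / t := by
      rw [le_div_iff₀ ht0]
      nlinarith [mul_nonneg (sub_nonneg.2 hta) (by positivity : (0:ℝ) ≤ t ^ 2 + t * ap + ap ^ 2 + 1)]
    rw [hh]; simp only
    rw [min_eq_left this]; norm_num
  have h_mid : ∀ t ∈ Ioc ap am, h t = 1 + (1 / t - t ^ 2) := by
    rintro t ⟨hta, htm⟩
    have ht0 : 0 < t := lt_trans hap0 hta
    have hdle : (1 - t ^ 3) / t ≤ 1 := by
      rw [div_le_iff₀ ht0]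
      nlinarith [mul_nonneg (sub_nonneg.2 hta.le) (by positivity : (0:ℝ) ≤ t ^ 2 + t * ap + ap ^ 2 + 1)]
    have hge : 0 ≤ 1 + (1 - t ^ 3) / t := by
      have : t ^ 3 - t ≤ 1 := by
        nlinarith [mul_nonneg (sub_nonneg.2 htm)
          (by nlinarith : (0:ℝ) ≤ t ^ 2 + t * am + am ^ 2 - 1)]
      have heq : 1 + (1 - t ^ 3) / t = (t + 1 - t ^ 3) / t := by field_simp; ring
      rw [heq]
      exact div_nonneg (by linarith) ht0.le
    rw [hh]; simp only
    rw [min_eq_right hdle, max_eq_right hge]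
    field_simp
  -- measurability and integrability of h
  have hm_h : Measurable h := by
    apply Measurable.max measurable_const
    apply Measurable.add measurable_const
    apply Measurable.min measurable_const
    exact ((measurable_const.sub (measurable_id.pow_const 3)).div measurable_id)
  have hInt1 : IntegrableOn h (Ioc 0 ap) := by
    refine Measure.integrableOn_of_bounded (ne_of_lt measure_Ioc_lt_top)
      hm_h.aestronglyMeasurable (ae_of_all _ fun t => ?_) (M := 2)
    rw [Real.norm_of_nonneg (h_nonneg t)]; exact h_le2 t
  have hInt2 : IntegrableOn h (Ioc ap am) := by
    refine Measure.integrableOn_of_bounded (ne_of_lt measure_Ioc_lt_top)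
      hm_h.aestronglyMeasurable (ae_of_all _ fun t => ?_) (M := 2)
    rw [Real.norm_of_nonneg (h_nonneg t)]; exact h_le2 t
  have hInt3 : IntegrableOn h (Ioi am) := by
    have heq : EqOn h (fun _ => (0:ℝ)) (Ioi am) := fun t ht => h_zero t ht
    exact (integrableOn_congr_fun heq measurableSet_Ioi).mpr (integrableOn_zero)
  -- integrability of x ↦ h |x|
  have hg_int : Integrable (fun x : ℝ => h |x|) := by
    have hb : Integrable ((Icc (-am) am).indicator (fun _ : ℝ => (2:ℝ))) := by
      refine IntegrableOn.integrable_indicator ?_ measurableSet_Icc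
      exact integrableOn_const measure_Icc_lt_top.ne
    refine Integrable.mono' hb (hm_h.comp measurable_abs).aestronglyMeasurable
      (ae_of_all _ fun x => ?_)
    rw [Real.norm_of_nonneg (h_nonneg _)]
    by_cases hx : x ∈ Icc (-am) am
    · rw [indicator_of_mem hx]; exact h_le2 _
    · rw [indicator_of_notMem hx]
      have : am < |x| := lt_of_not_ge fun hle => hx (abs_le.mp hle)
      rw [h_zero _ this]
  -- value of the real integral
  have hval : ∫ x : ℝ, h |x| = 2 * Real.log (am / ap) + (4 / 3) * (ap + am) := by
    rw [integral_comp_abs]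
    have e2 : Ioi ap = Ioc ap am ∪ Ioi am := (Ioc_union_Ioi_eq_Ioi hapam).symm
    have hInt23 : IntegrableOn h (Ioi ap) := by rw [e2]; exact hInt2.union hInt3
    have e1 : Ioi (0:ℝ) = Ioc 0 ap ∪ Ioi ap := (Ioc_union_Ioi_eq_Ioi hap0.le).symm
    rw [e1, setIntegral_union (Ioc_disjoint_Ioi le_rfl) measurableSet_Ioi hInt1 hInt23,
      e2, setIntegral_union (Ioc_disjoint_Ioi le_rfl) measurableSet_Ioi hInt2 hInt3]
    have p1 : ∫ x in Ioc (0:ℝ) ap, h x = 2 * ap := by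
      rw [setIntegral_congr_fun measurableSet_Ioc h_two, setIntegral_const, Real.volume_real_Ioc_of_le hap0.le,
        smul_eq_mul]
      ring
    have p3 : ∫ x in Ioi am, h x = 0 := by
      rw [setIntegral_congr_fun measurableSet_Ioi (fun t ht => h_zero t ht)]
      simp
    have p2 : ∫ x in Ioc ap am, h x
        = (am - ap) + (Real.log am - Real.log ap) - (am ^ 3 - ap ^ 3) / 3 := by
      rw [setIntegral_congr_fun measurableSet_Ioc h_mid,
        ← intervalIntegral.integral_of_le hapam]
      have hF : ∀ x ∈ uIcc ap am, HasDerivAt (fun x => x + Real.log x - x ^ 3 / 3)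
          (1 + (1 / x - x ^ 2)) x := by
        intro x hx
        rw [uIcc_of_le hapam] at hx
        have hx0 : x ≠ 0 := ne_of_gt (lt_of_lt_of_le hap0 hx.1)
        have := ((hasDerivAt_id x).add (Real.hasDerivAt_log hx0)).sub
          ((hasDerivAt_pow 3 x).div_const 3)
        refine this.congr_deriv ?_
        norm_num
        ring
      have hIc : IntervalIntegrable (fun x => 1 + (1 / x - x ^ 2)) volume ap am := by
        apply ContinuousOn.intervalIntegrable
        rw [uIcc_of_le hapam]
        have h0 : ∀ x ∈ Icc ap am, x ≠ 0 := fun x hx => ne_of_gt (lt_of_lt_of_le hap0 hx.1)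
        exact continuousOn_const.add (((continuousOn_const.div continuousOn_id h0)).sub
          ((continuous_pow 2).continuousOn))
      rw [intervalIntegral.integral_eq_sub_of_hasDerivAt hF hIc]
      ring
    rw [p1, p2, p3, Real.log_div (ne_of_gt ham0) (ne_of_gt hap0)]
    have h3 : am ^ 3 - ap ^ 3 = am + ap := by linarith
    rw [h3]
    ring
  -- measurability of the swapped region
  have hS'meas : MeasurableSet {p : ℝ × ℝ | |p.2| < 1 ∧ |p.1 ^ 3 + p.2 * p.1| < 1} := by
    have : IsOpen {p : ℝ × ℝ | |p.2| < 1 ∧ |p.1 ^ 3 + p.2 * p.1| < 1} := by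
      have h1 : IsOpen {p : ℝ × ℝ | |p.2| < 1} :=
        isOpen_lt (continuous_snd.abs) continuous_const
      have h2 : IsOpen {p : ℝ × ℝ | |p.1 ^ 3 + p.2 * p.1| < 1} :=
        isOpen_lt (((continuous_fst.pow 3).add (continuous_snd.mul continuous_fst)).abs)
          continuous_const
      exact h1.inter h2
    exact this.measurableSet
  -- slice computation
  have hsec : ∀ x : ℝ, x ≠ 0 →
      volume (Prod.mk x ⁻¹' {p : ℝ × ℝ | |p.2| < 1 ∧ |p.1 ^ 3 + p.2 * p.1| < 1})
        = ENNReal.ofReal (h |x|) := by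
    intro x hx
    have hpre : Prod.mk x ⁻¹' {p : ℝ × ℝ | |p.2| < 1 ∧ |p.1 ^ 3 + p.2 * p.1| < 1}
        = {y : ℝ | |y| < 1 ∧ |x ^ 3 + y * x| < 1} := rfl
    rcases hx.lt_or_gt with hneg | hpos
    · have key : x ^ 3 - x - 1 < 0 := by
        nlinarith [mul_nonneg (by linarith : (0:ℝ) ≤ -x) (sq_nonneg (x + 1)), sq_nonneg (2 * x + 1)]
      have habs : (1 - |x| ^ 3) / |x| = (-1 - x ^ 3) / x := by rw [abs_of_neg hneg]; ring
      have hset : {y : ℝ | |y| < 1 ∧ |x ^ 3 + y * x| < 1}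
          = Ioo (-1) (min 1 ((-1 - x ^ 3) / x)) := by
        ext y
        simp only [mem_setOf_eq, abs_lt, mem_Ioo, lt_min_iff]
        rw [lt_div_iff_of_neg hneg]
        constructor
        · rintro ⟨⟨h1, h2⟩, h3, h4⟩
          exact ⟨h1, h2, by linarith⟩
        · rintro ⟨h1, h2, h3⟩
          refine ⟨⟨h1, h2⟩, by linarith, ?_⟩
          nlinarith [mul_lt_mul_of_neg_right h1 hneg]
      rw [hpre, hset, Real.volume_Ioo, hh]
      simp only
      rw [habs, ofReal_max0]
      congr 1
      ring
    · have key : 0 < x ^ 3 - x + 1 := by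
        nlinarith [mul_nonneg hpos.le (sq_nonneg (x - 1)), sq_nonneg (2 * x - 1)]
      have habs : (1 - |x| ^ 3) / |x| = (1 - x ^ 3) / x := by rw [abs_of_pos hpos]
      have hset : {y : ℝ | |y| < 1 ∧ |x ^ 3 + y * x| < 1}
          = Ioo (-1) (min 1 ((1 - x ^ 3) / x)) := by
        ext y
        simp only [mem_setOf_eq, abs_lt, mem_Ioo, lt_min_iff]
        rw [lt_div_iff₀ hpos]
        constructor
        · rintro ⟨⟨h1, h2⟩, h3, h4⟩
          exact ⟨h1, h2, by linarith⟩
        · rintro ⟨h1, h2, h3⟩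
          refine ⟨⟨h1, h2⟩, ?_, by linarith⟩
          nlinarith [mul_lt_mul_of_pos_right h1 hpos]
      rw [hpre, hset, Real.volume_Ioo, hh]
      simp only
      rw [habs, ofReal_max0]
      congr 1
      ring
  -- put it together
  have hswap : {p : ℝ × ℝ | |p.1| < 1 ∧ |p.2 ^ 3 + p.1 * p.2| < 1}
      = Prod.swap ⁻¹' {p : ℝ × ℝ | |p.2| < 1 ∧ |p.1 ^ 3 + p.2 * p.1| < 1} := rfl
  rw [hswap, Measure.volume_eq_prod,
    Measure.measurePreserving_swap.measure_preimage hS'meas.nullMeasurableSet,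
    Measure.prod_apply hS'meas]
  have hae : ∀ᵐ x : ℝ,
      volume (Prod.mk x ⁻¹' {p : ℝ × ℝ | |p.2| < 1 ∧ |p.1 ^ 3 + p.2 * p.1| < 1})
        = ENNReal.ofReal (h |x|) := by
    filter_upwards [compl_mem_ae_iff.mpr (Real.volume_singleton (a := 0))] with x hx
    exact hsec x hx
  rw [lintegral_congr_ae hae,
    ← ofReal_integral_eq_lintegral_ofReal hg_int (ae_of_all _ fun x => h_nonneg _), hval]
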